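/- Termination criterion is sound: if at some state the maximum left boundary satisfies max_t ℓ_t ≤ min_t r_t, then for every pair s, t and every a < i_s, L_s[a] ≤ r_t; consequently no further transfer can be required and the vector i is a valid multi-way co-rank. -/
import Mathlib


open scoped BigOperators Classical

/-- Left boundary value `ℓ_t` of the cut: `L_t[i_t - 1]` if `i_t > 0`, else `⊥` (−∞). -/
noncomputable def lcut {m : ℕ} (n : Fin m → ℕ) (L : ∀ t, Fin (n t) → ℝ)
    (i : Fin m → ℕ) (t : Fin m) : EReal :=
  if h : 0 < i t ∧ i t ≤ n t then ((L t ⟨i t - 1, by omega⟩ : ℝ) : EReal) else ⊥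

/-- Right boundary value `r_t` of the cut: `L_t[i_t]` if `i_t < n_t`, else `⊤` (+∞). -/
noncomputable def rcut {m : ℕ} (n : Fin m → ℕ) (L : ∀ t, Fin (n t) → ℝ)
    (i : Fin m → ℕ) (t : Fin m) : EReal :=
  if h : i t < n t then ((L t ⟨i t, h⟩ : ℝ) : EReal) else ⊤

/-- the termination criterion is sound: if `max ℓ ≤ min r`, then
every prefix element is ≤ every right boundary, so `i` is a valid co-rank
(every prefix element is ≤ every suffix element). -/
theorem termination_criterion_sound {m : ℕ} (n : Fin m → ℕ) (L : ∀ t, Fin (n t) → ℝ)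
    (hmono : ∀ t, Monotone (L t)) (K : ℕ) (i : Fin m → ℕ)
    (hle : ∀ t, i t ≤ n t) (hsum : ∑ t, i t = K)
    (hstop : (⨆ t, lcut n L i t) ≤ ⨅ t, rcut n L i t) :
    (∀ (s t : Fin m) (a : Fin (n s)), (a : ℕ) < i s →
        ((L s a : ℝ) : EReal) ≤ rcut n L i t) ∧
    (∀ (s t : Fin m) (a : Fin (n s)) (b : Fin (n t)),
        (a : ℕ) < i s → i t ≤ (b : ℕ) → L s a ≤ L t b) := by
  have key : ∀ (s t : Fin m) (a : Fin (n s)), (a : ℕ) < i s →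
      ((L s a : ℝ) : EReal) ≤ rcut n L i t := by
    intro s t a ha
    have h1 : ((L s a : ℝ) : EReal) ≤ lcut n L i s := by
      rw [lcut]
      have hc : 0 < i s ∧ i s ≤ n s := ⟨by omega, hle s⟩
      rw [dif_pos hc]
      have : L s a ≤ L s ⟨i s - 1, by omega⟩ :=
        hmono s (by simp [Fin.le_def]; omega)
      exact_mod_cast this
    exact h1.trans (le_trans (le_trans (le_iSup _ s) hstop) (iInf_le _ t))
  refine ⟨key, fun s t a b ha hb => ?_⟩
  have h2 := key s t a ha
  have hlt : i t < n t := lt_of_le_of_lt hb b.isLt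
  rw [rcut, dif_pos hlt] at h2
  have h3 : L s a ≤ L t ⟨i t, hlt⟩ := by exact_mod_cast h2
  exact h3.trans (hmono t (by simp [Fin.le_def]; omega))
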